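/- Let (Ω, ℱ, ℙ) be a probability space, U a Polish space with Borel σ-algebra, 𝔲 : Ω → U measurable with law m := ℙ ∘ 𝔲⁻¹, and let Ξ¹, Ξ² : Ω → ℝ^N be square-integrable random variables. For i = 1, 2 let κⁱ be a regular conditional distribution of Ξⁱ given 𝔲. Then ∫_U W₂²(κ¹_u, κ²_u) dm(u) ≤ 𝔼[|Ξ¹ − Ξ²|²]. -/

import Mathlib

/-!
STATEMENT 4: If κ¹, κ² are regular conditional distributions of square-integrable ℝ^N-valued
random variables Ξ¹, Ξ² given 𝔲, then ∫_U W₂²(κ¹_u, κ²_u) dm(u) ≤ 𝔼[|Ξ¹ − Ξ²|²].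
-/

open MeasureTheory ProbabilityTheory

/-- The squared Wasserstein-2 distance: the infimum of `∫ d(x,y)² dπ` over all couplings π
of μ and ν (measures on E × E with first marginal μ and second marginal ν). -/
noncomputable def W2sq {E : Type*} [MeasurableSpace E] [PseudoEMetricSpace E]
    (μ ν : Measure E) : ENNReal :=
  ⨅ (π : Measure (E × E)) (_ : π.map Prod.fst = μ) (_ : π.map Prod.snd = ν),
    ∫⁻ p, edist p.1 p.2 ^ 2 ∂π

/-- `κ` is a regular conditional distribution of `ξ` given `u` under `P`: a Markov kernel such
that `P(ξ ∈ B, u ∈ D) = ∫_D κ_v(B) dm(v)` where `m = P ∘ u⁻¹`. -/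
def IsRCD {Ω U E : Type*} [MeasurableSpace Ω] [MeasurableSpace U] [MeasurableSpace E]
    (P : Measure Ω) (ξ : Ω → E) (u : Ω → U) (κ : U → Measure E) : Prop :=
  (∀ v, IsProbabilityMeasure (κ v)) ∧
  (∀ B : Set E, MeasurableSet B → Measurable fun v => κ v B) ∧
  (∀ B : Set E, MeasurableSet B → ∀ D : Set U, MeasurableSet D →
    P (ξ ⁻¹' B ∩ u ⁻¹' D) = ∫⁻ v in D, κ v B ∂(P.map u))

open ProbabilityTheory in
/-- Two finite measures on a product space agreeing on all measurable rectangles are equal. -/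
lemma ext_prod_meas {α β : Type*} [MeasurableSpace α] [MeasurableSpace β]
    {μ ν : Measure (α × β)} [IsFiniteMeasure μ] [IsFiniteMeasure ν]
    (h : ∀ s t : Set _, MeasurableSet s → MeasurableSet t → μ (s ×ˢ t) = ν (s ×ˢ t)) :
    μ = ν := by
  refine ext_of_generate_finite _ generateFrom_prod.symm isPiSystem_prod ?_ ?_
  · rintro _ ⟨s, hs, t, ht, rfl⟩
    exact h s t hs ht
  · have := h Set.univ Set.univ MeasurableSet.univ MeasurableSet.univ
    simpa using this

theorem stmt_4 (N : ℕ) (hN : 0 < N)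
    (Ω : Type*) [MeasurableSpace Ω] (P : Measure Ω) [IsProbabilityMeasure P]
    (U : Type*) [TopologicalSpace U] [PolishSpace U] [MeasurableSpace U] [BorelSpace U]
    (u : Ω → U) (hu : Measurable u)
    (Ξ₁ Ξ₂ : Ω → EuclideanSpace ℝ (Fin N))
    (hΞ₁m : Measurable Ξ₁) (hΞ₂m : Measurable Ξ₂)
    (hΞ₁ : MemLp Ξ₁ 2 P) (hΞ₂ : MemLp Ξ₂ 2 P)
    (κ₁ κ₂ : U → Measure (EuclideanSpace ℝ (Fin N)))
    (hκ₁ : IsRCD P Ξ₁ u κ₁) (hκ₂ : IsRCD P Ξ₂ u κ₂) :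
    ∫⁻ v, W2sq (κ₁ v) (κ₂ v) ∂(P.map u) ≤ ∫⁻ ω, edist (Ξ₁ ω) (Ξ₂ ω) ^ 2 ∂P := by
  classical
  set m : Measure U := P.map u with hm
  haveI : IsProbabilityMeasure m := Measure.isProbabilityMeasure_map hu.aemeasurable
  -- The joint law ρ of (u, (Ξ₁, Ξ₂)) on U × (E × E)
  have hpair : Measurable fun ω => (u ω, (Ξ₁ ω, Ξ₂ ω)) :=
    hu.prodMk (hΞ₁m.prodMk hΞ₂m)
  set ρ : Measure (U × (EuclideanSpace ℝ (Fin N) × EuclideanSpace ℝ (Fin N))) := P.map (fun ω => (u ω, (Ξ₁ ω, Ξ₂ ω))) with hρ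
  haveI : IsProbabilityMeasure ρ := Measure.isProbabilityMeasure_map hpair.aemeasurable
  have hρfst : ρ.fst = m := by
    rw [hρ, Measure.fst, Measure.map_map measurable_fst hpair]
    rfl
  -- kernels from κ₁ and κ₂
  have hK₁meas : Measurable κ₁ := Measure.measurable_of_measurable_coe _ fun s hs => hκ₁.2.1 s hs
  have hK₂meas : Measurable κ₂ := Measure.measurable_of_measurable_coe _ fun s hs => hκ₂.2.1 s hs
  set K₁ : ProbabilityTheory.Kernel U (EuclideanSpace ℝ (Fin N)) := ⟨κ₁, hK₁meas⟩ with hK₁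
  set K₂ : ProbabilityTheory.Kernel U (EuclideanSpace ℝ (Fin N)) := ⟨κ₂, hK₂meas⟩ with hK₂
  haveI : ProbabilityTheory.IsMarkovKernel K₁ := ⟨fun v => hκ₁.1 v⟩
  haveI : ProbabilityTheory.IsMarkovKernel K₂ := ⟨fun v => hκ₂.1 v⟩
  -- the disintegration kernel of ρ
  set η : ProbabilityTheory.Kernel U (EuclideanSpace ℝ (Fin N) × EuclideanSpace ℝ (Fin N)) := ρ.condKernel with hη
  have hdis : ρ.fst ⊗ₘ η = ρ := ρ.disintegrate ρ.condKernel
  -- joint laws of (u, Ξᵢ)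
  have key : ∀ (Ξ : Ω → EuclideanSpace ℝ (Fin N)) (hΞm : Measurable Ξ) (κ : U → Measure (EuclideanSpace ℝ (Fin N)))
      (hκ : IsRCD P Ξ u κ) (K : ProbabilityTheory.Kernel U (EuclideanSpace ℝ (Fin N))) (hK : ⇑K = κ)
      (_ : ProbabilityTheory.IsMarkovKernel K)
      (f : EuclideanSpace ℝ (Fin N) × EuclideanSpace ℝ (Fin N) → EuclideanSpace ℝ (Fin N)) (hf : Measurable f) (hfΞ : ∀ ω, f (Ξ₁ ω, Ξ₂ ω) = Ξ ω),
      ∀ᵐ v ∂m, κ v = (η v).map f := by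
    intro Ξ hΞm κ hκ K hK _ f hf hfΞ
    set ρ' : Measure (U × EuclideanSpace ℝ (Fin N)) := P.map (fun ω => (u ω, Ξ ω)) with hρ'
    have hpair' : Measurable fun ω => (u ω, Ξ ω) := hu.prodMk hΞm
    haveI : IsProbabilityMeasure ρ' := Measure.isProbabilityMeasure_map hpair'.aemeasurable
    have hρ'fst : ρ'.fst = m := by
      rw [hρ', Measure.fst, Measure.map_map measurable_fst hpair']
      rfl
    have hρ'map : ρ' = ρ.map (Prod.map id f) := by
      have hfun : (fun ω => (u ω, Ξ ω)) = (Prod.map id f) ∘ (fun ω => (u ω, Ξ₁ ω, Ξ₂ ω)) := by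
        funext ω
        simp only [Function.comp, Prod.map, id]
        rw [hfΞ ω]
      rw [hρ, hρ', Measure.map_map (measurable_id.prodMap hf) hpair, hfun]
    -- ρ' = m ⊗ₘ K
    have h1 : ρ' = ρ'.fst ⊗ₘ K := by
      rw [hρ'fst]
      refine ext_prod_meas fun s t hs ht => ?_
      rw [Measure.compProd_apply_prod hs ht, hρ', Measure.map_apply hpair' (hs.prod ht)]
      have hpre : (fun ω => (u ω, Ξ ω)) ⁻¹' (s ×ˢ t) = Ξ ⁻¹' t ∩ u ⁻¹' s := by
        ext ω; simp [Set.mem_prod, and_comm]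
      rw [hpre, hκ.2.2 t ht s hs]
      refine (setLIntegral_congr_fun hs (fun v _ => ?_)).symm
      rw [hK]
    -- ρ' = m ⊗ₘ (η.map f)
    have h2 : ρ' = ρ'.fst ⊗ₘ (η.map f) := by
      rw [hρ'fst, hρ'map, ← hdis, hρfst]
      refine ext_prod_meas fun s t hs ht => ?_
      rw [Measure.map_apply (measurable_id.prodMap hf) (hs.prod ht)]
      have hpre : Prod.map id f ⁻¹' (s ×ˢ t) = s ×ˢ (f ⁻¹' t) := by
        ext p; simp [Prod.map]
      rw [hpre, Measure.compProd_apply_prod hs (hf ht), Measure.compProd_apply_prod hs ht]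
      refine setLIntegral_congr_fun hs (fun v _ => ?_)
      rw [ProbabilityTheory.Kernel.map_apply _ hf, Measure.map_apply hf ht]
    have hu1 := ProbabilityTheory.eq_condKernel_of_measure_eq_compProd K h1
    have hu2 := ProbabilityTheory.eq_condKernel_of_measure_eq_compProd (η.map f) h2
    rw [hρ'fst] at hu1 hu2
    filter_upwards [hu1, hu2] with v hv1 hv2
    rw [← hK, hv1, ← hv2, ProbabilityTheory.Kernel.map_apply _ hf]
  have hae₁ : ∀ᵐ v ∂m, κ₁ v = (η v).map Prod.fst :=
    key Ξ₁ hΞ₁m κ₁ hκ₁ K₁ rfl inferInstance Prod.fst measurable_fst (fun ω => rfl)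
  have hae₂ : ∀ᵐ v ∂m, κ₂ v = (η v).map Prod.snd :=
    key Ξ₂ hΞ₂m κ₂ hκ₂ K₂ rfl inferInstance Prod.snd measurable_snd (fun ω => rfl)
  -- W2sq bound pointwise a.e.
  have hbound : ∀ᵐ v ∂m, W2sq (κ₁ v) (κ₂ v) ≤ ∫⁻ p, edist p.1 p.2 ^ 2 ∂(η v) := by
    filter_upwards [hae₁, hae₂] with v h1 h2
    exact iInf_le_of_le (η v) (iInf_le_of_le h1.symm (iInf_le_of_le h2.symm le_rfl))
  calc ∫⁻ v, W2sq (κ₁ v) (κ₂ v) ∂m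
      ≤ ∫⁻ v, ∫⁻ p, edist p.1 p.2 ^ 2 ∂(η v) ∂m := lintegral_mono_ae hbound
    _ = ∫⁻ q, edist q.2.1 q.2.2 ^ 2 ∂ρ := by
        rw [← hdis, hρfst, Measure.lintegral_compProd]
        exact (measurable_snd.fst.edist measurable_snd.snd).pow_const 2
    _ = ∫⁻ ω, edist (Ξ₁ ω) (Ξ₂ ω) ^ 2 ∂P := by
        rw [hρ, lintegral_map ((measurable_snd.fst.edist measurable_snd.snd).pow_const 2) hpair]
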